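/- Let N be a Nijenhuis operator on a Hom-Lie algebra (g, [·,·], α). Then the deformed bracket [x,y]_N := [Nx,y] + [x,Ny] − N[x,y] makes (g, [·,·]_N, α) a Hom-Lie algebra, and moreover (g, [·,·], [·,·]_N, α) is a compatible Hom-Lie algebra. -/
import Mathlib


/-- A bilinear map, as a predicate on plain two-argument functions. -/
def IsBilin (K : Type*) {M N P : Type*} [Field K] [AddCommGroup M] [Module K M]
    [AddCommGroup N] [Module K N] [AddCommGroup P] [Module K P]
    (b : M → N → P) : Prop :=
  (∀ x, IsLinearMap K (b x)) ∧ (∀ y, IsLinearMap K fun x => b x y)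

/-- A Hom-Lie algebra structure: bilinear skew-symmetric bracket `b` and a linear
twisting map `α` satisfying multiplicativity and the Hom-Jacobi identity. -/
def IsHomLie (K : Type*) {g : Type*} [Field K] [AddCommGroup g] [Module K g]
    (b : g → g → g) (α : g → g) : Prop :=
  IsBilin K b ∧ IsLinearMap K α ∧
  (∀ x y, b x y = - b y x) ∧
  (∀ x y, α (b x y) = b (α x) (α y)) ∧
  (∀ x y z, b (b x y) (α z) + b (b y z) (α x) + b (b z x) (α y) = 0)

/-- A compatible Hom-Lie algebra: both brackets and every linear combination of
them are Hom-Lie brackets with the same twisting map `α`. -/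
def IsCompatHomLie (K : Type*) {g : Type*} [Field K] [AddCommGroup g] [Module K g]
    (b₁ b₂ : g → g → g) (α : g → g) : Prop :=
  IsHomLie K b₁ α ∧ IsHomLie K b₂ α ∧
  ∀ l m : K, IsHomLie K (fun x y => l • b₁ x y + m • b₂ x y) α

/-- A Nijenhuis operator `N` on a Hom-Lie algebra deforms the bracket to a new
Hom-Lie bracket, and the original and deformed brackets are compatible. -/
theorem stmt7 {K g : Type*} [Field K] [AddCommGroup g] [Module K g]
    (b : g → g → g) (α : g → g) (N : g → g)
    (h : IsHomLie K b α) (hN : IsLinearMap K N)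
    (hcomm : ∀ x, α (N x) = N (α x))
    (hnij : ∀ x y, b (N x) (N y) = N (b (N x) y + b x (N y) - N (b x y))) :
    IsHomLie K (fun x y => b (N x) y + b x (N y) - N (b x y)) α ∧
    IsCompatHomLie K b (fun x y => b (N x) y + b x (N y) - N (b x y)) α := by
  obtain ⟨⟨hbl, hbr⟩, hα, hsk, hm, hJ⟩ := h
  set bN : g → g → g := fun x y => b (N x) y + b x (N y) - N (b x y) with hbN
  -- linearity helpers
  have ba1 : ∀ u v w : g, b (u + v) w = b u w + b v w := fun u v w => (hbr w).map_add u v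
  have bs1 : ∀ (c : K) (u w : g), b (c • u) w = c • b u w := fun c u w => (hbr w).map_smul c u
  have bsub1 : ∀ u v w : g, b (u - v) w = b u w - b v w := fun u v w => (hbr w).map_sub u v
  have ba2 : ∀ u v w : g, b u (v + w) = b u v + b u w := fun u v w => (hbl u).map_add v w
  have bs2 : ∀ (c : K) (u w : g), b u (c • w) = c • b u w := fun c u w => (hbl u).map_smul c w
  have bsub2 : ∀ u v w : g, b u (v - w) = b u v - b u w := fun u v w => (hbl u).map_sub v w
  have Na : ∀ u v : g, N (u + v) = N u + N v := hN.map_add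
  have Ns : ∀ (c : K) (u : g), N (c • u) = c • N u := hN.map_smul
  have Nsub : ∀ u v : g, N (u - v) = N u - N v := hN.map_sub
  have Nneg : ∀ u : g, N (-u) = - N u := hN.map_neg
  have N0 : N (0 : g) = 0 := hN.map_zero
  have Aa : ∀ u v : g, α (u + v) = α u + α v := hα.map_add
  have As : ∀ (c : K) (u : g), α (c • u) = c • α u := hα.map_smul
  have Asub : ∀ u v : g, α (u - v) = α u - α v := hα.map_sub
  -- bilinearity of the deformed bracket
  have bNa2 : ∀ x u v : g, bN x (u + v) = bN x u + bN x v := by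
    intro x u v; simp only [hbN, ba2, Na]; abel
  have bNs2 : ∀ (c : K) (x u : g), bN x (c • u) = c • bN x u := by
    intro c x u; simp only [hbN, bs2, Ns]; module
  have bNa1 : ∀ u v w : g, bN (u + v) w = bN u w + bN v w := by
    intro u v w; simp only [hbN, ba1, Na]; abel
  have bNs1 : ∀ (c : K) (u w : g), bN (c • u) w = c • bN u w := by
    intro c u w; simp only [hbN, bs1, Ns]; module
  -- skew-symmetry of the deformed bracket
  have hskN : ∀ x y, bN x y = - bN y x := by
    intro x y
    simp only [hbN]
    rw [hsk (N x) y, hsk x (N y), hsk x y, Nneg]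
    abel
  -- multiplicativity of the deformed bracket
  have hmN : ∀ x y, α (bN x y) = bN (α x) (α y) := by
    intro x y
    simp only [hbN, Asub, Aa, hm, hcomm]
  -- compatibility (mixed Jacobi) identity
  have hmix : ∀ x y z, b (bN x y) (α z) + bN (b x y) (α z) +
      (b (bN y z) (α x) + bN (b y z) (α x)) +
      (b (bN z x) (α y) + bN (b z x) (α y)) = 0 := by
    intro x y z
    have K1 := hJ (N x) y z
    have K2 := hJ x (N y) z
    have K3 := hJ x y (N z)
    simp only [hcomm] at K1 K2 K3
    have NJ := congrArg N (hJ x y z)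
    simp only [Na, N0] at NJ
    simp only [hbN, ba1, bsub1, Na, Nsub]
    linear_combination (norm := module) K1 + K2 + K3 - NJ
  -- Jacobi identity for the deformed bracket
  have hbNJ : ∀ x y z, bN (bN x y) (α z) + bN (bN y z) (α x) + bN (bN z x) (α y) = 0 := by
    intro x y z
    have K1 := hJ (N x) (N y) z
    have K2 := hJ x (N y) (N z)
    have K3 := hJ (N x) y (N z)
    simp only [hcomm] at K1 K2 K3
    have NJ1 := congrArg N (hJ (N x) y z)
    have NJ2 := congrArg N (hJ x (N y) z)
    have NJ3 := congrArg N (hJ x y (N z))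
    have NNJ := congrArg N (congrArg N (hJ x y z))
    simp only [Na, Nsub, N0, hcomm] at NJ1 NJ2 NJ3 NNJ
    have B1 := congrArg (fun u => b u (α z)) (hnij x y)
    have B2 := congrArg (fun u => b u (α x)) (hnij y z)
    have B3 := congrArg (fun u => b u (α y)) (hnij z x)
    simp only [Na, Nsub, ba1, bsub1] at B1 B2 B3
    have P1 := hnij (b x y) (α z)
    have P2 := hnij (b y z) (α x)
    have P3 := hnij (b z x) (α y)
    simp only [Na, Nsub] at P1 P2 P3
    simp only [hbN, Na, Nsub, ba1, bsub1]
    linear_combination (norm := module)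
      K1 + K2 + K3 - B1 - B2 - B3 - P1 - P2 - P3 - NJ1 - NJ2 - NJ3 + NNJ
  have homN : IsHomLie K bN α :=
    ⟨⟨fun x => ⟨fun u v => bNa2 x u v, fun c u => bNs2 c x u⟩,
      fun w => ⟨fun u v => bNa1 u v w, fun c u => bNs1 c u w⟩⟩,
      hα, hskN, hmN, hbNJ⟩
  have hcomb : ∀ l m : K, IsHomLie K (fun x y => l • b x y + m • bN x y) α := by
    intro l m
    refine ⟨⟨fun x => ⟨fun u v => ?_, fun c u => ?_⟩,
      fun w => ⟨fun u v => ?_, fun c u => ?_⟩⟩, hα, fun x y => ?_, fun x y => ?_,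
      fun x y z => ?_⟩
    · simp only [ba2, bNa2]; module
    · simp only [bs2, bNs2]; module
    · simp only [ba1, bNa1]; module
    · simp only [bs1, bNs1]; module
    · beta_reduce; rw [hsk x y, hskN x y]; module
    · beta_reduce; rw [Aa, As, As, hm, hmN]
    · simp only [ba1, bs1, bNa1, bNs1]
      linear_combination (norm := module)
        (l * l) • hJ x y z + (l * m) • hmix x y z + (m * m) • hbNJ x y z
  exact ⟨homN, ⟨⟨hbl, hbr⟩, hα, hsk, hm, hJ⟩, homN, hcomb⟩
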